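/- Let A be a nonempty finite set and let p_1, p_0 : A → ℝ satisfy p_1(a) > 0 and p_0(a) > 0 for all a ∈ A, ∑_{a∈A} p_1(a) = 1, and ∑_{a∈A} p_0(a) = 1. Define the likelihood ratio r(a) := p_1(a)/p_0(a) and the finite set Γ_t := { r(a) : a ∈ A }. For γ ∈ ℝ and p ∈ [0,1] define P_L(γ, p) := ∑_{a : r(a) > γ} p_1(a) + p · ∑_{a : r(a) = γ} p_1(a) and P_M(γ, p) := ∑_{a : r(a) > γ} p_0(a) + p · ∑_{a : r(a) = γ} p_0(a). Then for every γ ∈ ℝ and p ∈ [0,1] there exist γ' ∈ Γ_t and p' ∈ [0,1] such that P_L(γ', p') = P_L(γ, p) and P_M(γ', p') = P_M(γ, p). -/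

import Mathlib

open Finset

/-- Key splitting lemma: if `γ < r a0` and `a0` has minimal `r`-value among those above `γ`,
then the sum over `{γ < r a}` splits as sum over `{r a0 < r a}` plus sum over `{r a = r a0}`. -/
lemma split_sum {ι : Type*} [Fintype ι] (r : ι → ℝ) (γ : ℝ) (a0 : ι) (f : ι → ℝ)
    (hmem : γ < r a0) (hmin : ∀ a, γ < r a → r a0 ≤ r a) :
    ∑ a ∈ univ.filter (fun a => γ < r a), f a
      = ∑ a ∈ univ.filter (fun a => r a0 < r a), f a
        + ∑ a ∈ univ.filter (fun a => r a = r a0), f a := by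
  rw [← Finset.sum_filter_add_sum_filter_not (univ.filter (fun a => γ < r a))
      (fun a => r a0 < r a) f, Finset.filter_filter, Finset.filter_filter]
  congr 1
  · apply Finset.sum_congr _ (fun _ _ => rfl)
    apply Finset.filter_congr
    intro a _
    constructor
    · exact fun h => h.2
    · exact fun h => ⟨lt_of_lt_of_le hmem h.le, h⟩
  · apply Finset.sum_congr _ (fun _ _ => rfl)
    apply Finset.filter_congr
    intro a _
    simp only [not_lt]
    constructor
    · rintro ⟨h1, h2⟩; exact le_antisymm h2 (hmin a h1)
    · intro h; exact ⟨h ▸ hmem, h.le⟩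

/-- Lemma 3 of the paper: in the randomized likelihood-ratio trust test with threshold `γ`
and tie-break probability `p`, the pair of operating probabilities (probability of trusting
a legitimate robot, probability of trusting a malicious robot) achieved by any `γ ∈ ℝ` can
already be achieved with a threshold from the finite set `Γ_t` of likelihood-ratio values
`p1 a / p0 a`. -/
theorem lrt_threshold_reduction
    {ι : Type*} [Fintype ι] [Nonempty ι]
    (p1 p0 : ι → ℝ) (hp1 : ∀ a, 0 < p1 a) (hp0 : ∀ a, 0 < p0 a)
    (hsum1 : ∑ a, p1 a = 1) (hsum0 : ∑ a, p0 a = 1) :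
    ∀ (γ : ℝ), ∀ p ∈ Set.Icc (0 : ℝ) 1,
      ∃ (a0 : ι), ∃ p' ∈ Set.Icc (0 : ℝ) 1,
        ((∑ a ∈ Finset.univ.filter (fun a => p1 a0 / p0 a0 < p1 a / p0 a), p1 a) +
            p' * ∑ a ∈ Finset.univ.filter (fun a => p1 a / p0 a = p1 a0 / p0 a0), p1 a)
          = ((∑ a ∈ Finset.univ.filter (fun a => γ < p1 a / p0 a), p1 a) +
              p * ∑ a ∈ Finset.univ.filter (fun a => p1 a / p0 a = γ), p1 a) ∧
        ((∑ a ∈ Finset.univ.filter (fun a => p1 a0 / p0 a0 < p1 a / p0 a), p0 a) +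
            p' * ∑ a ∈ Finset.univ.filter (fun a => p1 a / p0 a = p1 a0 / p0 a0), p0 a)
          = ((∑ a ∈ Finset.univ.filter (fun a => γ < p1 a / p0 a), p0 a) +
              p * ∑ a ∈ Finset.univ.filter (fun a => p1 a / p0 a = γ), p0 a) := by
  intro γ p hp
  set r : ι → ℝ := fun a => p1 a / p0 a with hr
  by_cases h : ∃ a0, r a0 = γ
  · obtain ⟨a0, ha0⟩ := h
    have ha0' : p1 a0 / p0 a0 = γ := ha0
    exact ⟨a0, p, hp, by rw [ha0'], by rw [ha0']⟩
  · push_neg at h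
    have htie : univ.filter (fun a => r a = γ) = ∅ := by
      apply Finset.filter_false_of_mem
      intro a _
      exact h a
    by_cases hS : ∃ a, γ < r a
    · -- pick a0 minimizing r over the set above γ
      obtain ⟨a0, ha0mem, ha0min⟩ :=
        Finset.exists_min_image (univ.filter (fun a => γ < r a)) r
          (by obtain ⟨a, ha⟩ := hS; exact ⟨a, Finset.mem_filter.2 ⟨Finset.mem_univ a, ha⟩⟩)
      have hmem : γ < r a0 := (Finset.mem_filter.1 ha0mem).2
      have hmin : ∀ a, γ < r a → r a0 ≤ r a := fun a ha =>
        ha0min a (Finset.mem_filter.2 ⟨Finset.mem_univ a, ha⟩)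
      refine ⟨a0, 1, ⟨zero_le_one, le_refl 1⟩, ?_, ?_⟩
      · rw [htie, split_sum r γ a0 p1 hmem hmin]
        simp [hr]
      · rw [htie, split_sum r γ a0 p0 hmem hmin]
        simp [hr]
    · push_neg at hS
      -- everything ≤ γ; pick a0 maximizing r, then both sides are 0
      obtain ⟨a0, _, ha0max⟩ := Finset.exists_max_image univ r Finset.univ_nonempty
      have h1 : univ.filter (fun a => γ < r a) = ∅ :=
        Finset.filter_false_of_mem (fun a _ => not_lt.2 (hS a))
      have h2 : univ.filter (fun a => r a0 < r a) = ∅ :=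
        Finset.filter_false_of_mem (fun a _ => not_lt.2 (ha0max a (Finset.mem_univ a)))
      simp only [hr] at h1 h2 htie
      refine ⟨a0, 0, ⟨le_refl 0, zero_le_one⟩, ?_, ?_⟩ <;>
        simp [h1, h2, htie]
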